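/- Let F be a field of characteristic 0 and A a finite-dimensional central simple F-algebra. Then A = [A, A] ⊕ F·1 as F-vector spaces, where [A, A] is the linear span of commutators. -/

import Mathlib

/-- A finite-dimensional central simple algebra over a field of characteristic 0
decomposes as [A,A] ⊕ F·1. -/
theorem stmt_7 (F : Type*) [Field F] [CharZero F]
    (A : Type*) [Ring A] [Algebra F A] [FiniteDimensional F A]
    (hsimple : IsSimpleOrder (TwoSidedIdeal A))
    (hcentral : Subalgebra.center F A = ⊥) :
    IsCompl (Submodule.span F {u : A | ∃ v w : A, u = v * w - w * v})
      (Submodule.span F {(1 : A)}) := by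
  classical
  -- A is nontrivial
  have hnt : Nontrivial A := by
    by_contra h
    rw [not_nontrivial_iff_subsingleton] at h
    refine (bot_ne_top : (⊥ : TwoSidedIdeal A) ≠ ⊤) (SetLike.ext fun x => ?_)
    rw [Subsingleton.elim x 0]
    simp
  -- the trace form of the regular representation
  set T : A →ₗ[F] F := (LinearMap.trace F A).comp (Algebra.lmul F A).toLinearMap with hTdef
  have hT : ∀ x y : A, T (x * y) = T (y * x) := by
    intro x y
    show LinearMap.trace F A (Algebra.lmul F A (x*y)) = LinearMap.trace F A (Algebra.lmul F A (y*x))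
    rw [map_mul (Algebra.lmul F A) x y, map_mul (Algebra.lmul F A) y x, LinearMap.trace_mul_comm]
  have cyc : ∀ p q r : A, T (p*q*r) = T (r*p*q) := fun p q r => by
    rw [hT (p*q) r, ← mul_assoc]
  have h1 : T 1 = (Module.finrank F A : F) := by
    show LinearMap.trace F A (Algebra.lmul F A 1) = _
    rw [map_one (Algebra.lmul F A), LinearMap.trace_one]
  have h1ne : T 1 ≠ 0 := by
    rw [h1]
    exact_mod_cast (Module.finrank_pos (R := F) (M := A)).ne'
  set B : LinearMap.BilinForm F A := (LinearMap.mul F A).compr₂ T with hBdef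
  have hBapp : ∀ x y : A, B x y = T (x*y) := fun x y => rfl
  have hrefl : B.IsRefl := fun x y hxy => by rw [hBapp, hT]; exact hxy
  -- nondegeneracy via simplicity
  have hnd : B.Nondegenerate := by
    refine hrefl.nondegenerate_iff_separatingLeft.2 fun m hm => ?_
    set I : TwoSidedIdeal A := TwoSidedIdeal.mk' {m : A | ∀ n, T (m*n) = 0}
      (by intro n; simp)
      (by intro x y hx hy n; rw [add_mul, map_add, hx n, hy n, add_zero])
      (by intro x hx n; rw [neg_mul, map_neg, hx n, neg_zero])
      (by intro x y hy n; rw [mul_assoc, hT, mul_assoc]; exact hy (n*x))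
      (by intro x y hx n; rw [mul_assoc]; exact hx (y*n)) with hIdef
    have memI : ∀ z : A, z ∈ I ↔ ∀ n, T (z*n) = 0 := fun z =>
      TwoSidedIdeal.mem_mk' _ _ _ _ _ _ z
    rcases hsimple.eq_bot_or_eq_top I with hI | hI
    · have : m ∈ I := (memI m).2 fun n => hm n
      rw [hI] at this
      simpa using this
    · exfalso
      have : (1 : A) ∈ I := by rw [hI]; trivial
      have := (memI 1).1 this 1
      rw [one_mul] at this
      exact h1ne this
  set K := Submodule.span F {u : A | ∃ v w : A, u = v * w - w * v} with hKdef
  set L := Submodule.span F {(1 : A)} with hLdef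
  -- K is contained in ker T
  have hKker : K ≤ LinearMap.ker T := by
    rw [hKdef, Submodule.span_le]
    rintro u ⟨v, w, rfl⟩
    simp only [SetLike.mem_coe, LinearMap.mem_ker, map_sub, hT v w, sub_self]
  -- disjointness
  have hdisj : Disjoint K L := by
    rw [Submodule.disjoint_def]
    intro x hxK hxL
    obtain ⟨c, rfl⟩ := Submodule.mem_span_singleton.1 hxL
    have h0 : T (c • (1:A)) = 0 := hKker hxK
    rw [map_smul, smul_eq_mul] at h0
    rcases mul_eq_zero.1 h0 with hc | hc
    · rw [hc, zero_smul]
    · exact absurd hc h1ne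
  -- orthogonal complement of K is contained in L
  have horth : B.orthogonal K ≤ L := by
    intro y hy
    have hyc : ∀ a : A, y * a = a * y := by
      intro a
      have key : ∀ b : A, B (y*a - a*y) b = 0 := by
        intro b
        have hcom : B (a*b - b*a) y = 0 :=
          hy (a*b - b*a) (Submodule.subset_span ⟨a, b, rfl⟩)
        rw [hBapp, sub_mul, map_sub] at hcom ⊢
        have e1 : T (y*a*b) = T (a*b*y) := by rw [cyc y a b, cyc b y a]
        have e2 : T (a*y*b) = T (b*a*y) := cyc a y b
        rw [e1, e2]
        exact hcom
      have := hnd.1 _ key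
      rwa [sub_eq_zero] at this
    have hyctr : y ∈ Subalgebra.center F A := Subalgebra.mem_center_iff.2 fun a => (hyc a).symm
    rw [hcentral] at hyctr
    obtain ⟨c, rfl⟩ := Algebra.mem_bot.1 hyctr
    exact Submodule.mem_span_singleton.2 ⟨c, (Algebra.algebraMap_eq_smul_one c).symm⟩
  -- dimension count
  have hLrk : Module.finrank F L = 1 := finrank_span_singleton one_ne_zero
  have horthrk : Module.finrank F (B.orthogonal K) =
      Module.finrank F A - Module.finrank F K :=
    LinearMap.BilinForm.finrank_orthogonal hnd K
  have horthle : Module.finrank F (B.orthogonal K) ≤ 1 := by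
    have := Submodule.finrank_mono horth
    omega
  have hKle : Module.finrank F K ≤ Module.finrank F A := K.finrank_le
  have hsum := Submodule.finrank_sup_add_finrank_inf_eq K L
  rw [hdisj.eq_bot, finrank_bot, add_zero] at hsum
  have hsuple : Module.finrank F (K ⊔ L : Submodule F A) ≤ Module.finrank F A :=
    (K ⊔ L).finrank_le
  have hApos : 0 < Module.finrank F A := Module.finrank_pos
  constructor
  · exact hdisj
  · rw [codisjoint_iff]
    apply Submodule.eq_top_of_finrank_eq
    omega
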